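/- (Classical monotonicity criterion, zero-scaling case) Let Δ = (y_{i+1}−y_i)/h > 0, d_i ≥ 0, d_{i+1} ≥ 0, and suppose r ≥ (d_i + d_{i+1})/Δ. Then the coefficients T = d_{i+1}, S = 2(rΔ − d_i), U = (r²+3)Δ − r(d_i+d_{i+1}), V = 2(rΔ − d_{i+1}), W = d_i are all nonnegative, and hence the rational function θ ↦ [Tθ⁴+Sθ³(1−θ)+Uθ²(1−θ)²+Vθ(1−θ)³+W(1−θ)⁴]/[1+(r−3)θ(1−θ)]² is nonnegative on [0,1]. -/
import Mathlib


theorem stmt_15 (Δ di di1 r : ℝ) (hΔ : 0 < Δ) (hdi : 0 ≤ di) (hdi1 : 0 ≤ di1)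
    (hr1 : r > -1) (hr : r ≥ (di + di1) / Δ) :
    (0 ≤ di1 ∧ 0 ≤ 2 * (r * Δ - di) ∧ 0 ≤ (r^2 + 3) * Δ - r * (di + di1) ∧
     0 ≤ 2 * (r * Δ - di1) ∧ 0 ≤ di) ∧
    ∀ θ ∈ Set.Icc (0:ℝ) 1,
      0 ≤ (di1 * θ^4 + 2 * (r * Δ - di) * θ^3 * (1 - θ)
          + ((r^2 + 3) * Δ - r * (di + di1)) * θ^2 * (1 - θ)^2
          + 2 * (r * Δ - di1) * θ * (1 - θ)^3 + di * (1 - θ)^4) /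
          (1 + (r - 3) * θ * (1 - θ))^2 := by
  have hrΔ : di + di1 ≤ r * Δ := by
    have := (div_le_iff₀ hΔ).mp hr
    linarith
  have hr0 : 0 ≤ r := by
    have h1 : 0 ≤ (di + di1) / Δ := div_nonneg (by linarith) hΔ.le
    linarith
  have hS : 0 ≤ 2 * (r * Δ - di) := by linarith
  have hV : 0 ≤ 2 * (r * Δ - di1) := by linarith
  have hU : 0 ≤ (r^2 + 3) * Δ - r * (di + di1) := by
    have h2 : r * (di + di1) ≤ r * (r * Δ) := mul_le_mul_of_nonneg_left hrΔ hr0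
    nlinarith
  refine ⟨⟨hdi1, hS, hU, hV, hdi⟩, ?_⟩
  intro θ hθ
  obtain ⟨h0, h1⟩ := hθ
  have h1' : 0 ≤ 1 - θ := by linarith
  apply div_nonneg _ (sq_nonneg _)
  have := sq_nonneg θ
  have := sq_nonneg (1 - θ)
  positivity
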